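/- Let p ≥ 3 be an odd prime, let n be an odd positive integer, let m be an integer, and let ν₁, …, ν_{n−1} be integers. Set J = { i ∈ {1,…,n−1} : 2mnν_i ≢ 0 (mod p) }, and let S := p · Σ_{(x₁,…,x_{n−1}) ∈ (ℤ/pℤ)^{n−1}} e( 2mn Σ_{i=1}^{n−1} ν_i x_i² ) ∈ ℂ, where e(a) = exp(2π√−1 · ā / p). Then S is different from its complex conjugate (equivalently, S is not real) if and only if p ≡ 3 (mod 4) and #J is odd. -/
import Mathlib


open Finset

/-- The additive character `e : ℤ/pℤ → ℂ`, `e(a) = exp(2π√-1 · ā / p)`, where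
`ā ∈ {0, …, p-1}` is the representative of `a`. -/
noncomputable def zmodChar (p : ℕ) (a : ZMod p) : ℂ :=
  Complex.exp (2 * Real.pi * Complex.I * (a.val : ℂ) / (p : ℂ))


lemma addChar_map_sum {A M ι : Type*} [AddCommMonoid A] [CommMonoid M]
    (ψ : AddChar A M) (s : Finset ι) (f : ι → A) :
    ψ (∑ i ∈ s, f i) = ∏ i ∈ s, ψ (f i) := by
  induction s using Finset.cons_induction with
  | empty => simp
  | cons a s h ih => rw [Finset.sum_cons, Finset.prod_cons, ψ.map_add_eq_mul, ih]

lemma zmodChar_eq_stdAddChar (p : ℕ) [NeZero p] (a : ZMod p) :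
    zmodChar p a = ZMod.stdAddChar a := by
  rw [zmodChar, ZMod.stdAddChar_apply, ZMod.toCircle_apply]

lemma conj_stdAddChar (p : ℕ) [NeZero p] (a : ZMod p) :
    (starRingEnd ℂ) (ZMod.stdAddChar a) = ZMod.stdAddChar (-a) := by
  have h : a = ((a.val : ℤ) : ZMod p) := by
    rw [Int.cast_natCast, ZMod.natCast_zmod_val]
  rw [h, ← Int.cast_neg, ZMod.stdAddChar_coe, ZMod.stdAddChar_coe, ← Complex.exp_conj]
  congr 1
  push_cast
  simp only [map_div₀, map_mul, Complex.conj_I, Complex.conj_ofReal, map_ofNat,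
    map_intCast, map_natCast]
  ring

lemma sum_stdAddChar_mul_sq (p : ℕ) [Fact p.Prime] (hchar : ringChar (ZMod p) ≠ 2)
    {a : ZMod p} (ha : a ≠ 0) :
    ∑ y : ZMod p, ZMod.stdAddChar (a * y ^ 2)
      = ((quadraticChar (ZMod p) a : ℤ) : ℂ) *
        gaussSum ((quadraticChar (ZMod p)).ringHomComp (Int.castRingHom ℂ)) ZMod.stdAddChar := by
  set χ : MulChar (ZMod p) ℂ := (quadraticChar (ZMod p)).ringHomComp (Int.castRingHom ℂ) with hχ
  set ψ : AddChar (ZMod p) ℂ := ZMod.stdAddChar with hψ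
  have hχa : χ a = ((quadraticChar (ZMod p) a : ℤ) : ℂ) := rfl
  have hcount : ∀ t : ZMod p, (((univ.filter (fun y : ZMod p => y ^ 2 = t)).card : ℤ))
      = quadraticChar (ZMod p) t + 1 := by
    intro t
    rw [← quadraticChar_card_sqrts hchar t]
    congr 1
    simp [Set.toFinset_setOf]
  have step1 : ∑ y : ZMod p, ψ (a * y ^ 2)
      = ∑ t : ZMod p, (((quadraticChar (ZMod p) t : ℤ) : ℂ) + 1) * ψ (a * t) := by
    rw [← Finset.sum_fiberwise' univ (fun y : ZMod p => y ^ 2) (fun t => ψ (a * t))]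
    refine Finset.sum_congr rfl fun t _ => ?_
    rw [Finset.sum_const, nsmul_eq_mul]
    congr 1
    have := hcount t
    exact_mod_cast congrArg (fun z : ℤ => (z : ℂ)) this
  have hzero : ∑ t : ZMod p, ψ (a * t) = 0 := by
    have h1 : AddChar.mulShift ψ a ≠ 1 := (ZMod.isPrimitive_stdAddChar p) ha
    have := AddChar.sum_eq_zero_of_ne_one h1
    simpa [AddChar.mulShift_apply] using this
  have hgs : ∑ t : ZMod p, χ t * ψ (a * t) = χ a * gaussSum χ ψ := by
    have hu : IsUnit a := isUnit_iff_ne_zero.mpr ha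
    have h1 := gaussSum_mulShift χ ψ hu.unit
    have h2 : gaussSum χ (AddChar.mulShift ψ a) = ∑ t : ZMod p, χ t * ψ (a * t) := by
      simp [gaussSum, AddChar.mulShift_apply]
    have hsq : χ a * χ a = 1 := by
      rw [hχa, ← Int.cast_mul, ← sq, quadraticChar_sq_one ha, Int.cast_one]
    rw [IsUnit.unit_spec, h2] at h1
    calc ∑ t : ZMod p, χ t * ψ (a * t)
        = 1 * ∑ t : ZMod p, χ t * ψ (a * t) := (one_mul _).symm
      _ = χ a * (χ a * ∑ t : ZMod p, χ t * ψ (a * t)) := by rw [← mul_assoc, hsq]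
      _ = χ a * gaussSum χ ψ := by rw [h1]
  calc ∑ y : ZMod p, ψ (a * y ^ 2)
      = ∑ t : ZMod p, (((quadraticChar (ZMod p) t : ℤ) : ℂ) + 1) * ψ (a * t) := step1
    _ = (∑ t : ZMod p, χ t * ψ (a * t)) + ∑ t : ZMod p, ψ (a * t) := by
        rw [← Finset.sum_add_distrib]
        refine Finset.sum_congr rfl fun t _ => ?_
        rw [add_mul, one_mul]
        rfl
    _ = ((quadraticChar (ZMod p) a : ℤ) : ℂ) * gaussSum χ ψ := by
        rw [hzero, add_zero, hgs, hχa]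

/-- The reduced quandle cocycle invariant
`S = Φ̃_p(𝒮_n(a, Δ̃^{2m})) = p · Σ_{x ∈ (ℤ/pℤ)^{n-1}} e(2mn Σᵢ νᵢ xᵢ²)` differs from its
complex conjugate if and only if `p ≡ 3 (mod 4)` and `#J` is odd, where
`J = {i : 2mnνᵢ ≢ 0 (mod p)}`. -/
theorem reduced_cocycle_invariant_ne_conj_iff (p : ℕ) [Fact p.Prime] (hp : Odd p)
    (n : ℕ) (hn : Odd n) (hn0 : 0 < n) (m : ℤ) (ν : Fin (n - 1) → ℤ) :
    ((p : ℂ) * ∑ x : Fin (n - 1) → ZMod p,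
        zmodChar p (((2 * m * n : ℤ) : ZMod p) * ∑ i, (ν i : ZMod p) * (x i) ^ 2) ≠
      (starRingEnd ℂ) ((p : ℂ) * ∑ x : Fin (n - 1) → ZMod p,
        zmodChar p (((2 * m * n : ℤ) : ZMod p) * ∑ i, (ν i : ZMod p) * (x i) ^ 2))) ↔
    (p % 4 = 3 ∧
      Odd (univ.filter (fun i => ((2 * m * n * ν i : ℤ) : ZMod p) ≠ 0)).card) := by 
  have hp2 : p ≠ 2 := by
    rintro rfl
    simp [Nat.odd_iff] at hp
  have hppos : p ≠ 0 := (Fact.out (p := p.Prime)).ne_zero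
  have hchar : ringChar (ZMod p) ≠ 2 := by
    rw [ZMod.ringChar_zmod_n]; exact hp2
  set χ : MulChar (ZMod p) ℂ := (quadraticChar (ZMod p)).ringHomComp (Int.castRingHom ℂ) with hχ
  set ψ : AddChar (ZMod p) ℂ := ZMod.stdAddChar with hψ
  set G : ℂ := gaussSum χ ψ with hG
  have hχapp : ∀ a : ZMod p, χ a = ((quadraticChar (ZMod p) a : ℤ) : ℂ) := fun a => rfl
  have hψprim : ψ.IsPrimitive := ZMod.isPrimitive_stdAddChar p
  have hχne : χ ≠ 1 :=
    (MulChar.ringHomComp_ne_one_iff (by exact_mod_cast Int.cast_injective)).mpr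
      (quadraticChar_ne_one hchar)
  have hcard : (Fintype.card (ZMod p) : ℂ) ≠ 0 := by
    rw [ZMod.card]; exact_mod_cast hppos
  have hGne : G ≠ 0 := gaussSum_ne_zero_of_nontrivial hcard hχne hψprim
  set J : Finset (Fin (n - 1)) :=
    univ.filter (fun i => ((2 * m * n * ν i : ℤ) : ZMod p) ≠ 0) with hJ
  -- the sum factors as a product
  have hsum : ∑ x : Fin (n - 1) → ZMod p,
      zmodChar p (((2 * m * n : ℤ) : ZMod p) * ∑ i, (ν i : ZMod p) * (x i) ^ 2)
      = ∏ i, ∑ y : ZMod p, ψ (((2 * m * n * ν i : ℤ) : ZMod p) * y ^ 2) := by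
    rw [Finset.prod_univ_sum, Fintype.piFinset_univ]
    refine Finset.sum_congr rfl fun x _ => ?_
    rw [zmodChar_eq_stdAddChar, ← addChar_map_sum]
    congr 1
    rw [Finset.mul_sum]
    refine Finset.sum_congr rfl fun i _ => ?_
    push_cast
    ring
  set k : ℕ := (univ.filter (fun i => ¬ ((2 * m * n * ν i : ℤ) : ZMod p) ≠ 0)).card with hk
  set A : ℂ := (p : ℂ) * ((p : ℂ) ^ k *
      ∏ i ∈ J, ((quadraticChar (ZMod p) ((2 * m * n * ν i : ℤ) : ZMod p) : ℤ) : ℂ)) with hA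
  have hsplit : (p : ℂ) * ∑ x : Fin (n - 1) → ZMod p,
      zmodChar p (((2 * m * n : ℤ) : ZMod p) * ∑ i, (ν i : ZMod p) * (x i) ^ 2)
      = A * G ^ J.card := by
    rw [hsum, ← Finset.prod_filter_mul_prod_filter_not univ
      (fun i => ((2 * m * n * ν i : ℤ) : ZMod p) ≠ 0)]
    have h1 : ∏ i ∈ J, ∑ y : ZMod p, ψ (((2 * m * n * ν i : ℤ) : ZMod p) * y ^ 2)
        = (∏ i ∈ J, ((quadraticChar (ZMod p) ((2 * m * n * ν i : ℤ) : ZMod p) : ℤ) : ℂ))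
          * G ^ J.card := by
      rw [← Finset.prod_const, ← Finset.prod_mul_distrib]
      refine Finset.prod_congr rfl fun i hi => ?_
      have hi' : ((2 * m * n * ν i : ℤ) : ZMod p) ≠ 0 := (Finset.mem_filter.mp hi).2
      exact sum_stdAddChar_mul_sq p hchar hi'
    have h2 : ∏ i ∈ univ.filter (fun i => ¬ ((2 * m * n * ν i : ℤ) : ZMod p) ≠ 0),
        ∑ y : ZMod p, ψ (((2 * m * n * ν i : ℤ) : ZMod p) * y ^ 2) = (p : ℂ) ^ k := by
      rw [hk, ← Finset.prod_const]
      refine Finset.prod_congr rfl fun i hi => ?_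
      have hi' : ((2 * m * n * ν i : ℤ) : ZMod p) = 0 :=
        not_not.mp (Finset.mem_filter.mp hi).2
      simp [hi', ZMod.card]
    rw [← hJ, h1, h2, hA]
    ring
  -- conjugates
  have hconjG : (starRingEnd ℂ) G = ((quadraticChar (ZMod p) (-1) : ℤ) : ℂ) * G := by
    calc (starRingEnd ℂ) G = ∑ t : ZMod p, χ t * ψ (-t) := by
          rw [hG, gaussSum, map_sum]
          refine Finset.sum_congr rfl fun t _ => ?_
          rw [map_mul, hψ, conj_stdAddChar]
          congr 1
          rw [hχapp t, map_intCast]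
      _ = ∑ t : ZMod p, χ (-t) * ψ t := by
          refine Fintype.sum_equiv (Equiv.neg (ZMod p)) _ _ fun t => ?_
          simp
      _ = ((quadraticChar (ZMod p) (-1) : ℤ) : ℂ) * G := by
          rw [hG, gaussSum, Finset.mul_sum]
          refine Finset.sum_congr rfl fun t _ => ?_
          rw [show (-t) = (-1 : ZMod p) * t from (neg_one_mul t).symm, map_mul, mul_assoc,
            hχapp (-1)]
  have hconjA : (starRingEnd ℂ) A = A := by
    rw [hA, map_mul, map_mul, map_natCast, map_pow, map_natCast, map_prod]
    congr 1
    congr 1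
    exact Finset.prod_congr rfl fun i _ => map_intCast _ _
  have hAne : A ≠ 0 := by
    rw [hA]
    refine mul_ne_zero (by exact_mod_cast hppos) (mul_ne_zero (pow_ne_zero _ (by exact_mod_cast hppos)) ?_)
    rw [Finset.prod_ne_zero_iff]
    intro i hi
    have hi' : ((2 * m * n * ν i : ℤ) : ZMod p) ≠ 0 := (Finset.mem_filter.mp hi).2
    exact_mod_cast fun h => hi' (quadraticChar_eq_zero_iff.mp (by exact_mod_cast h))
  set ε : ℂ := ((quadraticChar (ZMod p) (-1) : ℤ) : ℂ) with hε
  rw [hsplit, map_mul, hconjA, map_pow, hconjG, mul_pow]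
  have key : A * G ^ J.card ≠ A * ((ε ^ J.card) * G ^ J.card) ↔ ε ^ J.card ≠ 1 := by
    constructor
    · intro h h1
      exact h (by rw [h1, one_mul])
    · intro h h1
      apply h
      have h2 := mul_left_cancel₀ hAne h1
      have h3 : (1 : ℂ) * G ^ J.card = ε ^ J.card * G ^ J.card := by
        rw [one_mul]; exact h2
      exact (mul_right_cancel₀ (pow_ne_zero J.card hGne) h3).symm
  rw [key]
  have hq : quadraticChar (ZMod p) (-1) = ZMod.χ₄ (p : ZMod 4) := by
    rw [quadraticChar_neg_one hchar, ZMod.card]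
  by_cases h4 : p % 4 = 3
  · have hqv : ε = -1 := by
      rw [hε, hq, ZMod.χ₄_nat_eq_if_mod_four]
      have : p % 2 = 1 := Nat.odd_iff.mp hp
      simp [this, h4]
    rw [hqv]
    simp only [h4, true_and, ne_eq,
      neg_one_pow_eq_one_iff_even (by norm_num : (-1 : ℂ) ≠ 1)]
    exact Nat.not_even_iff_odd
  · have hqv : ε = 1 := by
      rw [hε, hq, ZMod.χ₄_nat_eq_if_mod_four]
      have h2 : p % 2 = 1 := Nat.odd_iff.mp hp
      have h1 : p % 4 = 1 := by omega
      simp [h2, h1]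
    rw [hqv, one_pow]
    simp [h4]
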